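/- Let κ > 0, G ≥ 0, w > 0 with w ≥ 2G², and let g : ℕ → ℝ satisfy g_i² ≤ G² for all i ≥ 1. Define η_s = κ / (w + ∑_{i=1}^{s} g_i²)^{1/3} for s ≥ 0. Then for every t ≥ 1, 1/η_t − 1/η_{t−1} ≤ (2^{2/3}·G² / (3κ³))·η_t². -/

import Mathlib

lemma rstorm_key (A B : ℝ) (hA : 0 < A) (hAB : A ≤ B) (hB2 : B ≤ 2 * A) :
    B ^ ((1:ℝ)/3) - A ^ ((1:ℝ)/3)
      ≤ (2:ℝ) ^ ((2:ℝ)/3) * (B - A) / (3 * (B ^ ((1:ℝ)/3)) ^ 2) := by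
  have hB : 0 < B := lt_of_lt_of_le hA hAB
  set a := A ^ ((1:ℝ)/3) with ha
  set b := B ^ ((1:ℝ)/3) with hb
  have hapos : 0 < a := Real.rpow_pos_of_pos hA _
  have hbpos : 0 < b := Real.rpow_pos_of_pos hB _
  have ha3 : a ^ 3 = A := by
    rw [ha, ← Real.rpow_natCast (A ^ ((1:ℝ)/3)) 3, ← Real.rpow_mul hA.le]
    norm_num
  have hb3 : b ^ 3 = B := by
    rw [hb, ← Real.rpow_natCast (B ^ ((1:ℝ)/3)) 3, ← Real.rpow_mul hB.le]
    norm_num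
  have hab : a ≤ b := by
    rw [ha, hb]
    exact Real.rpow_le_rpow hA.le hAB (by norm_num)
  -- b - a ≤ (B - A)/(3 a²)
  have key1 : b - a ≤ (B - A) / (3 * a ^ 2) := by
    rw [le_div_iff₀ (by positivity)]
    nlinarith [ha3, hb3, sq_nonneg (b - a), mul_pos hapos hbpos]
  -- b² ≤ 2^{2/3} a²
  have hc : (2:ℝ) ^ ((1:ℝ)/3) * a ≥ b := by
    have h3 : b ^ 3 ≤ ((2:ℝ) ^ ((1:ℝ)/3) * a) ^ 3 := by
      have : ((2:ℝ) ^ ((1:ℝ)/3)) ^ 3 = 2 := by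
        rw [← Real.rpow_natCast ((2:ℝ) ^ ((1:ℝ)/3)) 3, ← Real.rpow_mul (by norm_num)]
        norm_num
      rw [mul_pow, this, ha3, hb3]
      linarith
    exact le_of_pow_le_pow_left₀ (by norm_num) (by positivity) h3
  have hb2 : b ^ 2 ≤ (2:ℝ) ^ ((2:ℝ)/3) * a ^ 2 := by
    have h22 : ((2:ℝ) ^ ((1:ℝ)/3)) ^ 2 = (2:ℝ) ^ ((2:ℝ)/3) := by
      rw [← Real.rpow_natCast ((2:ℝ) ^ ((1:ℝ)/3)) 2, ← Real.rpow_mul (by norm_num)]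
      norm_num
    calc b ^ 2 ≤ ((2:ℝ) ^ ((1:ℝ)/3) * a) ^ 2 := by
          apply pow_le_pow_left₀ hbpos.le hc
      _ = (2:ℝ) ^ ((2:ℝ)/3) * a ^ 2 := by rw [mul_pow, h22]
  -- combine
  have hBA : 0 ≤ B - A := by linarith
  calc b - a ≤ (B - A) / (3 * a ^ 2) := key1
    _ ≤ (2:ℝ) ^ ((2:ℝ)/3) * (B - A) / (3 * b ^ 2) := by
        rw [div_le_div_iff₀ (by positivity) (by positivity)]
        have := mul_le_mul_of_nonneg_left hb2 hBA
        nlinarith [Real.rpow_pos_of_pos (by norm_num : (0:ℝ) < 2) ((2:ℝ)/3)]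

/-- Step-size difference bound for the adaptive step sizes of RStorm:
with `η_s = κ/(w + ∑_{i=1}^s g_i²)^{1/3}` one has
`1/η_t - 1/η_{t-1} ≤ (2^{2/3} G²/(3κ³)) η_t²` for all `t ≥ 1`. -/
theorem rstorm_stepsize_difference_bound
    (κ G w : ℝ) (hκ : 0 < κ) (hG : 0 ≤ G) (hw : 0 < w) (hwG : 2 * G ^ 2 ≤ w)
    (g : ℕ → ℝ) (hg : ∀ i : ℕ, 1 ≤ i → g i ^ 2 ≤ G ^ 2)
    (η : ℕ → ℝ)
    (hη : ∀ s : ℕ, η s = κ / (w + ∑ i ∈ Finset.Icc 1 s, g i ^ 2) ^ ((1 : ℝ) / 3)) :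
    ∀ t : ℕ, 1 ≤ t →
      1 / η t - 1 / η (t - 1) ≤ (2 : ℝ) ^ ((2 : ℝ) / 3) * G ^ 2 / (3 * κ ^ 3) * η t ^ 2 := by
  rintro t ht
  obtain ⟨s, rfl⟩ : ∃ s, t = s + 1 := ⟨t - 1, by omega⟩
  simp only [Nat.add_sub_cancel]
  set A : ℝ := w + ∑ i ∈ Finset.Icc 1 s, g i ^ 2 with hA
  have hApos : 0 < A := by
    have : 0 ≤ ∑ i ∈ Finset.Icc 1 s, g i ^ 2 :=
      Finset.sum_nonneg fun i _ => sq_nonneg _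
    linarith
  have hsum : (w + ∑ i ∈ Finset.Icc 1 (s + 1), g i ^ 2) = A + g (s+1) ^ 2 := by
    rw [hA, Finset.sum_Icc_succ_top (by omega : 1 ≤ s + 1)]
    ring
  set B : ℝ := A + g (s+1) ^ 2 with hB
  have hgs : g (s+1) ^ 2 ≤ G ^ 2 := hg _ (by omega)
  have hAB : A ≤ B := by
    have := sq_nonneg (g (s+1)); nlinarith [sq_nonneg (g (s+1))]
  have hBpos : 0 < B := lt_of_lt_of_le hApos hAB
  have hB2 : B ≤ 2 * A := by
    have hGA : G ^ 2 ≤ A / 2 := by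
      have : 0 ≤ ∑ i ∈ Finset.Icc 1 s, g i ^ 2 :=
        Finset.sum_nonneg fun i _ => sq_nonneg _
      rw [hA]; linarith
    rw [hB]; nlinarith
  have key := rstorm_key A B hApos hAB hB2
  have hbpos : 0 < B ^ ((1:ℝ)/3) := Real.rpow_pos_of_pos hBpos _
  have hapos : 0 < A ^ ((1:ℝ)/3) := Real.rpow_pos_of_pos hApos _
  have hηt : η (s+1) = κ / B ^ ((1:ℝ)/3) := by rw [hη, hsum]
  have hηs : η s = κ / A ^ ((1:ℝ)/3) := by rw [hη]
  rw [hηt, hηs, one_div_div, one_div_div]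
  have hBA : B - A = g (s+1) ^ 2 := by rw [hB]; ring
  have key2 : B ^ ((1:ℝ)/3) - A ^ ((1:ℝ)/3)
      ≤ (2:ℝ) ^ ((2:ℝ)/3) * G ^ 2 / (3 * (B ^ ((1:ℝ)/3)) ^ 2) := by
    refine key.trans ?_
    apply div_le_div_of_nonneg_right ?_ (by positivity) |>.trans_eq rfl
    have h2 : (0:ℝ) ≤ (2:ℝ) ^ ((2:ℝ)/3) := by positivity
    rw [hBA]
    nlinarith
  have hfinal : (2:ℝ) ^ ((2:ℝ)/3) * G ^ 2 / (3 * κ ^ 3) * (κ / B ^ ((1:ℝ)/3)) ^ 2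
      = ((2:ℝ) ^ ((2:ℝ)/3) * G ^ 2 / (3 * (B ^ ((1:ℝ)/3)) ^ 2)) / κ := by
    field_simp
  rw [hfinal, div_sub_div_same]
  exact div_le_div_of_nonneg_right key2 hκ.le |>.trans_eq rfl
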